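/- arXiv:1902.05430 — 2 statements merged into one kernel-verified Lean document; each statement's English description precedes it below -/
import Mathlib

section
/- Let X be an abelian duality space of dimension n with H₁(X, ℤ) free abelian, whose cohomology jump loci satisfy the propagation property V^n(X) ⊇ V^{n−1}(X) ⊇ ⋯ ⊇ V^0(X) = {trivial character} and the codimension bound codim V^{n−i}(X) ≥ i for all i ≥ 0. Then the Betti numbers satisfy b_i(X) > 0 for all 0 ≤ i ≤ n, and b₁(X) ≥ n. -/
/-- Betti positivity for abelian duality spaces.  Let `X` be an abelian duality space of
dimension `n` with `H₁(X,ℤ)` free abelian, so that `Char(X) ≅ (ℂ*)^{b₁(X)}` with jump loci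
`Vⁱ(X) ⊆ Char(X)` (here `Char` is the character variety, `triv` the trivial character, and
`dim` the dimension of a jump locus; `codim = b₁(X) − dim`).  Assume:
the propagation property `Vⁿ ⊇ V^{n-1} ⊇ ⋯ ⊇ V⁰ = {triv}`, the codimension bound
`codim V^{n-i} ≥ i` for all `0 ≤ i ≤ n`, and that the trivial character lies in `Vⁱ(X)`
precisely when `bᵢ(X) > 0`.  Then `bᵢ(X) > 0` for all `0 ≤ i ≤ n`, and `b₁(X) ≥ n`. -/
theorem abelian_duality_betti
    (n : ℕ)
    (Char : Type) (triv : Char)        -- the character variety and the trivial character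
    (V : ℕ → Set Char)                 -- the cohomology jump loci `Vⁱ(X)`
    (dim : Set Char → ℕ)               -- dimension of subvarieties of `Char(X)`
    (b : ℕ → ℕ)                        -- the Betti numbers of `X`
    (hV0 : V 0 = {triv})
    (hprop : ∀ j, j < n → V j ⊆ V (j + 1))                       -- propagation
    (hcodim : ∀ i, i ≤ n → dim (V (n - i)) + i ≤ b 1)            -- codim `V^{n-i} ≥ i`
    (hbetti : ∀ i, 0 < b i ↔ triv ∈ V i) :
    (∀ i, i ≤ n → 0 < b i) ∧ n ≤ b 1 := by
  have hmem : ∀ i, i ≤ n → triv ∈ V i := by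
    intro i
    induction i with
    | zero => intro _; rw [hV0]; rfl
    | succ k ih =>
      intro h
      exact hprop k (Nat.lt_of_succ_le h) (ih (Nat.le_of_succ_le h))
  refine ⟨fun i hi => (hbetti i).mpr (hmem i hi), ?_⟩
  have := hcodim n le_rfl
  omega
end

section
/- Let A be an abelian variety of dimension g and F a constructible complex on A whose jump loci satisfy Schnell's bound codim V^i(A, F) ≥ |2i| for all i ∈ ℤ. Then for generic ρ ∈ Char(A) ≅ (ℂ*)^{2g}, the twisted hypercohomology H^i(A, F ⊗ L_ρ) vanishes for all i ≠ 0, and hence χ(A, F) = dim H^0(A, F ⊗ L_ρ) ≥ 0 for such generic ρ. -/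
open Finset

/-- Generic vanishing from Schnell's codimension bound.  Let `A` be an abelian variety of
dimension `g`, `F` a constructible complex on `A`, `Char = Char(A) ≅ (ℂ*)^{2g}` its
(irreducible, `2g`-dimensional) character variety with Zariski closed subsets and
codimension, and `h ρ i = dim H^i(A, F ⊗ L_ρ)`, so the jump loci are
`Vⁱ(A,F) = {ρ : h ρ i ≠ 0}`.  Assume Schnell's bound `codim Vⁱ(A,F) ≥ |2i|` for all `i`.
Then there is a proper Zariski closed `Z ⊊ Char(A)` such that for all `ρ ∉ Z` one has
`H^i(A, F ⊗ L_ρ) = 0` for all `i ≠ 0` and `χ(A,F) = dim H⁰(A, F ⊗ L_ρ)`; in particular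
`χ(A, F) ≥ 0`. -/
theorem schnell_generic_vanishing
    (g N : ℕ)
    (Char : Type)
    (ZClosed : Set Char → Prop)          -- Zariski closed subsets of `Char(A)`
    (codim : Set Char → ℕ∞)              -- codimension of subsets of `Char(A)`
    (h : Char → ℤ → ℕ)                   -- `h ρ i = dim_ℂ H^i(A, F ⊗ L_ρ)`
    (χF : ℤ)                             -- `χ(A, F)`
    -- basic properties of the Zariski topology on the irreducible variety `Char(A)`:
    (hclosed : ∀ i : ℤ, ZClosed {ρ | h ρ i ≠ 0})
    (hunion : ∀ S T : Set Char, ZClosed S → ZClosed T → ZClosed (S ∪ T))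
    (hcodim_union : ∀ S T : Set Char, min (codim S) (codim T) ≤ codim (S ∪ T))
    (hproper : ∀ S : Set Char, ZClosed S → (1 ≤ codim S ↔ S ≠ Set.univ))
    (hgeneric : ∀ S : Set Char, ZClosed S → S ≠ Set.univ → ∃ ρ, ρ ∉ S)
    -- `F` has bounded constructible cohomology:
    (hsupp : ∀ i : ℤ, (N : ℤ) ≤ |i| → ∀ ρ, h ρ i = 0)
    -- `χ(A, F ⊗ L_ρ)` is independent of the rank-one twist `ρ`:
    (hchi : ∀ ρ, χF = ∑ i ∈ Icc (-(N : ℤ)) N, (((-1 : ℤˣ) ^ i : ℤˣ) : ℤ) * h ρ i)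
    -- Schnell's codimension bound `codim Vⁱ(A, F) ≥ |2i|`:
    (hcodim : ∀ i : ℤ, ((2 * i).natAbs : ℕ∞) ≤ codim {ρ | h ρ i ≠ 0}) :
    (∃ Z : Set Char, ZClosed Z ∧ Z ≠ Set.univ ∧
      ∀ ρ ∉ Z, (∀ i : ℤ, i ≠ 0 → h ρ i = 0) ∧ χF = h ρ 0) ∧
    0 ≤ χF := by

  classical
  -- index set of nonzero cohomological degrees to avoid
  set S : Finset ℤ := insert 1 ((Icc (-(N : ℤ)) N).erase 0) with hS
  have hSne : S.Nonempty := ⟨1, Finset.mem_insert_self _ _⟩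
  have hSnz : ∀ i ∈ S, i ≠ 0 := by
    intro i hi
    rcases Finset.mem_insert.mp hi with h1 | h2
    · simp [h1]
    · exact (Finset.mem_erase.mp h2).1
  -- the union of the jump loci over S is closed of codimension ≥ 1
  have key : ∀ T : Finset ℤ, T.Nonempty → (∀ i ∈ T, i ≠ 0) →
      ZClosed {ρ | ∃ i ∈ T, h ρ i ≠ 0} ∧ 1 ≤ codim {ρ | ∃ i ∈ T, h ρ i ≠ 0} := by
    intro T hT
    induction hT using Finset.Nonempty.cons_induction with
    | singleton a =>
      intro ha
      have ha0 : a ≠ 0 := ha a (by simp)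
      have hset : {ρ | ∃ i ∈ ({a} : Finset ℤ), h ρ i ≠ 0} = {ρ | h ρ a ≠ 0} := by
        ext ρ; simp
      rw [hset]
      refine ⟨hclosed a, le_trans ?_ (hcodim a)⟩
      have : (2 * a).natAbs ≠ 0 := by
        simp [Int.natAbs_eq_zero, ha0]
      exact_mod_cast Nat.one_le_iff_ne_zero.mpr this
    | cons a T haT hTne ih =>
      intro ha
      have ha0 : a ≠ 0 := ha a (Finset.mem_cons_self a T)
      have ihT := ih (fun i hi => ha i (Finset.mem_cons_of_mem hi))
      have hset : {ρ | ∃ i ∈ Finset.cons a T haT, h ρ i ≠ 0}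
          = {ρ | h ρ a ≠ 0} ∪ {ρ | ∃ i ∈ T, h ρ i ≠ 0} := by
        ext ρ; simp [Finset.mem_cons, or_and_right, exists_or]
      rw [hset]
      constructor
      · exact hunion _ _ (hclosed a) ihT.1
      · refine le_trans ?_ (hcodim_union _ _)
        refine le_min (le_trans ?_ (hcodim a)) ihT.2
        have : (2 * a).natAbs ≠ 0 := by simp [Int.natAbs_eq_zero, ha0]
        exact_mod_cast Nat.one_le_iff_ne_zero.mpr this
  obtain ⟨hZc, hZ1⟩ := key S hSne hSnz
  set Z : Set Char := {ρ | ∃ i ∈ S, h ρ i ≠ 0} with hZ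
  have hZne : Z ≠ Set.univ := (hproper Z hZc).mp hZ1
  have hvan : ∀ ρ ∉ Z, ∀ i : ℤ, i ≠ 0 → h ρ i = 0 := by
    intro ρ hρ i hi0
    by_cases hmem : i ∈ Icc (-(N : ℤ)) N
    · by_contra hne
      exact hρ ⟨i, Finset.mem_insert_of_mem (Finset.mem_erase.mpr ⟨hi0, hmem⟩), hne⟩
    · apply hsupp i _ ρ
      rw [Finset.mem_Icc] at hmem
      push_neg at hmem
      rcases le_or_gt 0 i with hpos | hneg
      · have := hmem (by linarith)
        rw [abs_of_nonneg hpos]; linarith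
      · rw [abs_of_neg hneg]; by_contra hc; push_neg at hc
        exact absurd (hmem (by linarith)) (by linarith)
  have hchi0 : ∀ ρ ∉ Z, χF = h ρ 0 := by
    intro ρ hρ
    rw [hchi ρ]
    rw [Finset.sum_eq_single_of_mem 0 (by simp [Finset.mem_Icc])]
    · simp
    · intro i hi hi0
      rw [hvan ρ hρ i hi0]
      simp
  refine ⟨⟨Z, hZc, hZne, fun ρ hρ => ⟨hvan ρ hρ, hchi0 ρ hρ⟩⟩, ?_⟩
  obtain ⟨ρ, hρ⟩ := hgeneric Z hZc hZne
  rw [hchi0 ρ hρ]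
  exact Int.ofNat_nonneg _
end
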